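/- Let $l$ be a finite-dimensional separable $k$-algebra with Casimir element $\sigma$, and let $U, V$ be finite-dimensional $l$-bimodules. The pairing $(U^* \otimes_l V^*)_l \times (V \otimes_l U)_l \to k$ given by $(\phi \otimes \theta, v \otimes u) \mapsto \phi(\sigma_2' u \sigma_1')\theta(\sigma_1'' v \sigma_2'')$ (where $\sigma_1, \sigma_2$ are two copies of the Casimir element) is well-defined and is symmetric under simultaneously exchanging $(\phi,\theta)$ with $(\theta,\phi)$ and $(u,v)$ with $(v,u)$ (via the flip isomorphisms on $(U^*\otimes_l V^*)_l$ and $(V \otimes_l U)_l$). -/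
import Mathlib


open TensorProduct MulOpposite

section Prelim

variable (k l : Type) [Field k] [Ring l] [Algebra k l]
variable (U : Type) [AddCommGroup U] [Module k U] [Module l U] [Module lᵐᵒᵖ U]
  [IsScalarTower k l U] [IsScalarTower k lᵐᵒᵖ U] [SMulCommClass l lᵐᵒᵖ U]

/-- For `φ ∈ U^*` and `u ∈ U`, the bilinear functional `(x₁, x₂) ↦ φ(x₂ • u • x₁)`
(left action of `x₂`, right action of `x₁`), as a linear map on `l ⊗ l`. -/
noncomputable def doubleContract (φ : U →ₗ[k] k) (u : U) : l ⊗[k] l →ₗ[k] k :=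
  TensorProduct.lift (LinearMap.mk₂ k (fun x₁ x₂ => φ (x₂ • op x₁ • u))
    (by intro x x' y; simp [op_add, add_smul, smul_add])
    (by intro c x y; simp only [op_smul, smul_assoc]; rw [smul_comm y c]; simp)
    (by intro x y y'; simp [add_smul])
    (by intro c x y; simp [smul_assoc]))

end Prelim

section Pairing

variable (k l : Type) [Field k] [Ring l] [Algebra k l]
variable (U V : Type)
  [AddCommGroup U] [Module k U] [Module l U] [Module lᵐᵒᵖ U]
  [IsScalarTower k l U] [IsScalarTower k lᵐᵒᵖ U] [SMulCommClass l lᵐᵒᵖ U]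
  [AddCommGroup V] [Module k V] [Module l V] [Module lᵐᵒᵖ V]
  [IsScalarTower k l V] [IsScalarTower k lᵐᵒᵖ V] [SMulCommClass l lᵐᵒᵖ V]

/-- The value `φ(σ₂' u σ₁') θ(σ₁'' v σ₂'')` of the pairing
`(U^* ⊗_l V^*)_l × (V ⊗_l U)_l → k` on `(φ ⊗ θ, v ⊗ u)`, where `σ₁, σ₂` are two copies of
the Casimir element `σ`.  The tensor `σ ⊗ σ ∈ (l⊗l)⊗(l⊗l)` is rearranged to
`(σ₁'⊗σ₂')⊗(σ₁''⊗σ₂'')` and contracted against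
`φ(x₂ • u • x₁)` and `θ(y₁ • v • y₂)`. -/
noncomputable def pairVal (σ : l ⊗[k] l)
    (φ : U →ₗ[k] k) (θ : V →ₗ[k] k) (v : V) (u : U) : k :=
  (TensorProduct.lift ((LinearMap.mul k k).compl₁₂
      (doubleContract k l U φ u)
      (TensorProduct.lift (LinearMap.mk₂ k (fun y₁ y₂ => θ (y₁ • op y₂ • v))
        (by intro x x' y; simp [add_smul])
        (by intro c x y; simp [smul_assoc])
        (by intro x y y'; simp [op_add, add_smul, smul_add])
        (by intro c x y; simp only [op_smul, smul_assoc]; rw [smul_comm x c]; simp)))))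
    ((TensorProduct.tensorTensorTensorComm k l l l l) (σ ⊗ₜ[k] σ))

end Pairing

/-!
STATEMENT 4: Let `l` be a finite-dimensional separable `k`-algebra with Casimir element
`σ`, and let `U, V` be finite-dimensional `l`-bimodules.  The pairing
`(U^* ⊗_l V^*)_l × (V ⊗_l U)_l → k`,
`(φ ⊗ θ, v ⊗ u) ↦ φ(σ₂' u σ₁') θ(σ₁'' v σ₂'')`,
is well-defined (i.e. balanced for all four of the defining relations of the two
coinvariant tensor products, stated element-wise below) and is symmetric under
simultaneously exchanging `(φ, θ)` with `(θ, φ)` and `(u, v)` with `(v, u)`.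
Module actions on duals:  `(φ·a)(u) = φ(a u)`, `(a·φ)(u) = φ(u a)`.
-/
set_option linter.unusedSectionVars false

section Casimir

variable (k l : Type) [Field k] [Ring l] [Algebra k l]

noncomputable def casPhi (Tr : l →ₗ[k] k) : l ⊗[k] l →ₗ[k] (l →ₗ[k] l) :=
  (dualTensorHom k l l).comp (LinearMap.rTensor l ((LinearMap.mul k l).compr₂ Tr))

lemma casPhi_tmul (Tr : l →ₗ[k] k) (x y z : l) :
    casPhi k l Tr (x ⊗ₜ[k] y) z = Tr (x * z) • y := by
  simp [casPhi, dualTensorHom_apply]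

variable (Tr : l →ₗ[k] k)
variable (hTrSymm : ∀ a b : l, Tr (a * b) = Tr (b * a))

include hTrSymm in
lemma casPhi_eq_F (t : l ⊗[k] l) (z : l) :
    casPhi k l Tr t z
      = (TensorProduct.lid k l) ((LinearMap.rTensor l (((LinearMap.mul k l).compr₂ Tr) z)) t) := by
  induction t using TensorProduct.induction_on with
  | zero => simp
  | tmul x y => simp [casPhi_tmul, hTrSymm x z]
  | add t1 t2 h1 h2 => simp [map_add, h1, h2, LinearMap.add_apply]

include hTrSymm in
lemma casPhi_rTensor_mulLeft (a : l) (t : l ⊗[k] l) (z : l) :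
    casPhi k l Tr (LinearMap.rTensor l (LinearMap.mulLeft k a) t) z = casPhi k l Tr t (z * a) := by
  induction t using TensorProduct.induction_on with
  | zero => simp
  | tmul x y =>
    simp only [LinearMap.rTensor_tmul, LinearMap.mulLeft_apply, casPhi_tmul]
    rw [mul_assoc, hTrSymm, mul_assoc]
  | add t1 t2 h1 h2 => simp [map_add, h1, h2, LinearMap.add_apply]

lemma casPhi_lTensor_mulRight (a : l) (t : l ⊗[k] l) (z : l) :
    casPhi k l Tr (LinearMap.lTensor l (LinearMap.mulRight k a) t) z = casPhi k l Tr t z * a := by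
  induction t using TensorProduct.induction_on with
  | zero => simp
  | tmul x y =>
    simp only [LinearMap.lTensor_tmul, LinearMap.mulRight_apply, casPhi_tmul, smul_mul_assoc]
  | add t1 t2 h1 h2 => simp [map_add, h1, h2, LinearMap.add_apply, add_mul]

lemma casPhi_rTensor_mulRight (a : l) (t : l ⊗[k] l) (z : l) :
    casPhi k l Tr (LinearMap.rTensor l (LinearMap.mulRight k a) t) z = casPhi k l Tr t (a * z) := by
  induction t using TensorProduct.induction_on with
  | zero => simp
  | tmul x y =>
    simp only [LinearMap.rTensor_tmul, LinearMap.mulRight_apply, casPhi_tmul, mul_assoc]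
  | add t1 t2 h1 h2 => simp [map_add, h1, h2, LinearMap.add_apply]

lemma casPhi_lTensor_mulLeft (a : l) (t : l ⊗[k] l) (z : l) :
    casPhi k l Tr (LinearMap.lTensor l (LinearMap.mulLeft k a) t) z = a * casPhi k l Tr t z := by
  induction t using TensorProduct.induction_on with
  | zero => simp
  | tmul x y =>
    simp only [LinearMap.lTensor_tmul, LinearMap.mulLeft_apply, casPhi_tmul, mul_smul_comm]
  | add t1 t2 h1 h2 => simp [map_add, h1, h2, LinearMap.add_apply, mul_add]

include hTrSymm in
lemma casPhi_comm_pair (t : l ⊗[k] l) (z w : l) :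
    Tr (casPhi k l Tr ((TensorProduct.comm k l l) t) z * w) = Tr (z * casPhi k l Tr t w) := by
  induction t using TensorProduct.induction_on with
  | zero => simp
  | tmul x y =>
    simp only [comm_tmul, casPhi_tmul, smul_mul_assoc, mul_smul_comm, map_smul, smul_eq_mul]
    rw [hTrSymm y z, mul_comm]
  | add t1 t2 h1 h2 => simp [map_add, h1, h2, LinearMap.add_apply, add_mul, mul_add]

variable [FiniteDimensional k l]

lemma casPhi_injective
    (hTrNondeg : ∀ a : l, (∀ b : l, Tr (a * b) = 0) → a = 0) :
    Function.Injective (casPhi k l Tr) := by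
  have hτ : Function.Injective ((LinearMap.mul k l).compr₂ Tr) := by
    refine (injective_iff_map_eq_zero _).mpr fun a h => hTrNondeg a fun b => ?_
    simpa using LinearMap.congr_fun h b
  have h1 : Function.Injective
      (LinearMap.rTensor (R := k) l ((LinearMap.mul k l).compr₂ Tr)) :=
    Module.Flat.rTensor_preserves_injective_linearMap _ hτ
  have b := Module.Free.chooseBasis k l
  have h2 : Function.Injective (dualTensorHom k l l) := fun x y h =>
    (dualTensorHomEquivOfBasis (N := l) b).injective (by simpa using h)
  exact h2.comp h1

variable (σ : l ⊗[k] l)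
variable (hCasimir : ∀ z : l,
    (TensorProduct.lid k l)
      ((LinearMap.rTensor l (((LinearMap.mul k l).compr₂ Tr) z)) σ) = z)

include hTrSymm hCasimir in
lemma casPhi_casimir (z : l) : casPhi k l Tr σ z = z :=
  (casPhi_eq_F k l Tr hTrSymm σ z).trans (hCasimir z)

include hTrSymm hCasimir in
lemma casimir_B (a : l)
    (hTrNondeg : ∀ a : l, (∀ b : l, Tr (a * b) = 0) → a = 0) :
    LinearMap.rTensor l (LinearMap.mulLeft k a) σ
      = LinearMap.lTensor l (LinearMap.mulRight k a) σ := by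
  apply casPhi_injective k l Tr hTrNondeg
  ext z
  rw [casPhi_rTensor_mulLeft k l Tr hTrSymm, casPhi_lTensor_mulRight,
    casPhi_casimir k l Tr hTrSymm σ hCasimir, casPhi_casimir k l Tr hTrSymm σ hCasimir]

include hTrSymm hCasimir in
lemma casimir_C (a : l)
    (hTrNondeg : ∀ a : l, (∀ b : l, Tr (a * b) = 0) → a = 0) :
    LinearMap.rTensor l (LinearMap.mulRight k a) σ
      = LinearMap.lTensor l (LinearMap.mulLeft k a) σ := by
  apply casPhi_injective k l Tr hTrNondeg
  ext z
  rw [casPhi_rTensor_mulRight, casPhi_lTensor_mulLeft,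
    casPhi_casimir k l Tr hTrSymm σ hCasimir, casPhi_casimir k l Tr hTrSymm σ hCasimir]

include hTrSymm hCasimir in
lemma casimir_comm
    (hTrNondeg : ∀ a : l, (∀ b : l, Tr (a * b) = 0) → a = 0) :
    (TensorProduct.comm k l l) σ = σ := by
  apply casPhi_injective k l Tr hTrNondeg
  ext z
  rw [casPhi_casimir k l Tr hTrSymm σ hCasimir]
  have key : ∀ w : l, Tr ((casPhi k l Tr ((TensorProduct.comm k l l) σ) z - z) * w) = 0 := by
    intro w
    rw [sub_mul, map_sub, casPhi_comm_pair k l Tr hTrSymm,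
      casPhi_casimir k l Tr hTrSymm σ hCasimir, sub_self]
  exact sub_eq_zero.mp (hTrNondeg _ key)

end Casimir

section Aux
variable (k l : Type) [Field k] [Ring l] [Algebra k l]
variable (U V : Type)
  [AddCommGroup U] [Module k U] [Module l U] [Module lᵐᵒᵖ U]
  [IsScalarTower k l U] [IsScalarTower k lᵐᵒᵖ U] [SMulCommClass l lᵐᵒᵖ U]
  [AddCommGroup V] [Module k V] [Module l V] [Module lᵐᵒᵖ V]
  [IsScalarTower k l V] [IsScalarTower k lᵐᵒᵖ V] [SMulCommClass l lᵐᵒᵖ V]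

noncomputable def pairAux (φ : U →ₗ[k] k) (θ : V →ₗ[k] k) (v : V) (u : U) :
    l ⊗[k] l →ₗ[k] l ⊗[k] l →ₗ[k] k :=
  TensorProduct.curry ((TensorProduct.lift ((LinearMap.mul k k).compl₁₂
      (doubleContract k l U φ u)
      (TensorProduct.lift (LinearMap.mk₂ k (fun y₁ y₂ => θ (y₁ • op y₂ • v))
        (by intro x x' y; simp [add_smul])
        (by intro c x y; simp [smul_assoc])
        (by intro x y y'; simp [op_add, add_smul, smul_add])
        (by intro c x y; simp only [op_smul, smul_assoc]; rw [smul_comm x c]; simp))))).comp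
    (TensorProduct.tensorTensorTensorComm k l l l l).toLinearMap)

lemma pairVal_eq (σ : l ⊗[k] l) (φ : U →ₗ[k] k) (θ : V →ₗ[k] k) (v : V) (u : U) :
    pairVal k l U V σ φ θ v u = pairAux k l U V φ θ v u σ σ := rfl

lemma pairAux_tmul (φ : U →ₗ[k] k) (θ : V →ₗ[k] k) (v : V) (u : U) (p q x y : l) :
    pairAux k l U V φ θ v u (p ⊗ₜ[k] q) (x ⊗ₜ[k] y)
      = φ (x • op p • u) * θ (q • op y • v) := by
  simp [pairAux, doubleContract, TensorProduct.curry_apply,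
    TensorProduct.tensorTensorTensorComm_tmul]

/-- Extensionality for bilinear maps on `l ⊗ l`. -/
lemma bilExt {f g : l ⊗[k] l →ₗ[k] l ⊗[k] l →ₗ[k] k}
    (h : ∀ p q x y : l, f (p ⊗ₜ q) (x ⊗ₜ y) = g (p ⊗ₜ q) (x ⊗ₜ y)) : f = g :=
  TensorProduct.ext' fun p q => TensorProduct.ext' fun x y => h p q x y

variable (a : l) (φ : U →ₗ[k] k) (θ : V →ₗ[k] k) (v : V) (u : U) (t s : l ⊗[k] l)

lemma pA_i₁ :
    pairAux k l U V (φ ∘ₗ (Algebra.lsmul k k U a : Module.End k U)) θ v u t s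
      = pairAux k l U V φ θ v u t (LinearMap.rTensor l (LinearMap.mulLeft k a) s) := by
  have : pairAux k l U V (φ ∘ₗ (Algebra.lsmul k k U a : Module.End k U)) θ v u
      = (LinearMap.lcomp k k (LinearMap.rTensor l (LinearMap.mulLeft k a))).comp
          (pairAux k l U V φ θ v u) := by
    refine bilExt k l fun p q x y => ?_
    simp [pairAux_tmul, smul_smul]
  rw [this]; rfl

lemma pA_i₂ :
    pairAux k l U V φ (θ ∘ₗ (Algebra.lsmul k k V (op a) : Module.End k V)) v u t s
      = pairAux k l U V φ θ v u t (LinearMap.lTensor l (LinearMap.mulRight k a) s) := by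
  have : pairAux k l U V φ (θ ∘ₗ (Algebra.lsmul k k V (op a) : Module.End k V)) v u
      = (LinearMap.lcomp k k (LinearMap.lTensor l (LinearMap.mulRight k a))).comp
          (pairAux k l U V φ θ v u) := by
    refine bilExt k l fun p q x y => ?_
    simp only [pairAux_tmul, LinearMap.lcomp_apply, LinearMap.comp_apply,
      LinearMap.lTensor_tmul, LinearMap.mulRight_apply, Algebra.lsmul_coe]
    congr 2
    rw [← smul_comm q (op a) (op y • v), smul_smul, ← op_mul]
  rw [this]; rfl

lemma pA_ii₁ :
    pairAux k l U V (φ ∘ₗ (Algebra.lsmul k k U (op a) : Module.End k U)) θ v u t s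
      = pairAux k l U V φ θ v u (LinearMap.rTensor l (LinearMap.mulRight k a) t) s := by
  have : pairAux k l U V (φ ∘ₗ (Algebra.lsmul k k U (op a) : Module.End k U)) θ v u
      = (pairAux k l U V φ θ v u).comp (LinearMap.rTensor l (LinearMap.mulRight k a)) := by
    refine bilExt k l fun p q x y => ?_
    simp only [pairAux_tmul, LinearMap.comp_apply, LinearMap.rTensor_tmul,
      LinearMap.mulRight_apply, Algebra.lsmul_coe]
    congr 2
    rw [← smul_comm x (op a) (op p • u), smul_smul, ← op_mul]
  rw [this]; rfl

lemma pA_ii₂ :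
    pairAux k l U V φ (θ ∘ₗ (Algebra.lsmul k k V a : Module.End k V)) v u t s
      = pairAux k l U V φ θ v u (LinearMap.lTensor l (LinearMap.mulLeft k a) t) s := by
  have : pairAux k l U V φ (θ ∘ₗ (Algebra.lsmul k k V a : Module.End k V)) v u
      = (pairAux k l U V φ θ v u).comp (LinearMap.lTensor l (LinearMap.mulLeft k a)) := by
    refine bilExt k l fun p q x y => ?_
    simp [pairAux_tmul, smul_smul]
  rw [this]; rfl

lemma pA_iii₁ :
    pairAux k l U V φ θ (op a • v) u t s
      = pairAux k l U V φ θ v u t (LinearMap.lTensor l (LinearMap.mulLeft k a) s) := by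
  have : pairAux k l U V φ θ (op a • v) u
      = (LinearMap.lcomp k k (LinearMap.lTensor l (LinearMap.mulLeft k a))).comp
          (pairAux k l U V φ θ v u) := by
    refine bilExt k l fun p q x y => ?_
    simp only [pairAux_tmul, LinearMap.lcomp_apply, LinearMap.comp_apply,
      LinearMap.lTensor_tmul, LinearMap.mulLeft_apply]
    congr 2
    rw [smul_smul, ← op_mul]
  rw [this]; rfl

lemma pA_iii₂ :
    pairAux k l U V φ θ v (a • u) t s
      = pairAux k l U V φ θ v u t (LinearMap.rTensor l (LinearMap.mulRight k a) s) := by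
  have : pairAux k l U V φ θ v (a • u)
      = (LinearMap.lcomp k k (LinearMap.rTensor l (LinearMap.mulRight k a))).comp
          (pairAux k l U V φ θ v u) := by
    refine bilExt k l fun p q x y => ?_
    simp only [pairAux_tmul, LinearMap.lcomp_apply, LinearMap.comp_apply,
      LinearMap.rTensor_tmul, LinearMap.mulRight_apply]
    congr 2
    rw [← smul_comm a (op p) u, smul_smul]
  rw [this]; rfl

lemma pA_iv₁ :
    pairAux k l U V φ θ (a • v) u t s
      = pairAux k l U V φ θ v u (LinearMap.lTensor l (LinearMap.mulRight k a) t) s := by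
  have : pairAux k l U V φ θ (a • v) u
      = (pairAux k l U V φ θ v u).comp (LinearMap.lTensor l (LinearMap.mulRight k a)) := by
    refine bilExt k l fun p q x y => ?_
    simp only [pairAux_tmul, LinearMap.comp_apply, LinearMap.lTensor_tmul,
      LinearMap.mulRight_apply]
    congr 2
    rw [← smul_comm a (op y) v, smul_smul]
  rw [this]; rfl

lemma pA_iv₂ :
    pairAux k l U V φ θ v (op a • u) t s
      = pairAux k l U V φ θ v u (LinearMap.rTensor l (LinearMap.mulLeft k a) t) s := by
  have : pairAux k l U V φ θ v (op a • u)
      = (pairAux k l U V φ θ v u).comp (LinearMap.rTensor l (LinearMap.mulLeft k a)) := by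
    refine bilExt k l fun p q x y => ?_
    simp only [pairAux_tmul, LinearMap.comp_apply, LinearMap.rTensor_tmul,
      LinearMap.mulLeft_apply]
    congr 2
    rw [smul_smul, ← op_mul]
  rw [this]; rfl

lemma pA_symm :
    pairAux k l U V φ θ v u t s
      = pairAux k l V U θ φ u v ((TensorProduct.comm k l l) s) ((TensorProduct.comm k l l) t) := by
  have : pairAux k l U V φ θ v u
      = ((pairAux k l V U θ φ u v).comp (TensorProduct.comm k l l).toLinearMap).flip.comp
          (TensorProduct.comm k l l).toLinearMap := by
    refine bilExt k l fun p q x y => ?_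
    simp [pairAux_tmul, mul_comm]
  rw [this]; rfl

end Aux

theorem casimir_pairing_welldefined_symmetric
    (k l : Type) [Field k] [Ring l] [Algebra k l] [FiniteDimensional k l]
    (U V : Type)
    [AddCommGroup U] [Module k U] [Module l U] [Module lᵐᵒᵖ U]
    [IsScalarTower k l U] [IsScalarTower k lᵐᵒᵖ U] [SMulCommClass l lᵐᵒᵖ U]
    [FiniteDimensional k U]
    [AddCommGroup V] [Module k V] [Module l V] [Module lᵐᵒᵖ V]
    [IsScalarTower k l V] [IsScalarTower k lᵐᵒᵖ V] [SMulCommClass l lᵐᵒᵖ V]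
    [FiniteDimensional k V]
    (Tr : l →ₗ[k] k)
    (hTrSymm : ∀ a b : l, Tr (a * b) = Tr (b * a))
    (hTrNondeg : ∀ a : l, (∀ b : l, Tr (a * b) = 0) → a = 0)
    (σ : l ⊗[k] l)
    (hCasimir : ∀ z : l,
      (TensorProduct.lid k l)
        ((LinearMap.rTensor l (((LinearMap.mul k l).compr₂ Tr) z)) σ) = z) :
    -- (i) balancedness in the middle of `U^* ⊗_l V^*`: `φ·a ⊗ θ ∼ φ ⊗ a·θ`
    (∀ (a : l) (φ : U →ₗ[k] k) (θ : V →ₗ[k] k) (v : V) (u : U),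
      pairVal k l U V σ (φ ∘ₗ (Algebra.lsmul k k U a : Module.End k U)) θ v u
        = pairVal k l U V σ φ (θ ∘ₗ (Algebra.lsmul k k V (op a) : Module.End k V)) v u) ∧
    -- (ii) `l`-coinvariance of `U^* ⊗_l V^*`: `a·φ ⊗ θ ∼ φ ⊗ θ·a`
    (∀ (a : l) (φ : U →ₗ[k] k) (θ : V →ₗ[k] k) (v : V) (u : U),
      pairVal k l U V σ (φ ∘ₗ (Algebra.lsmul k k U (op a) : Module.End k U)) θ v u
        = pairVal k l U V σ φ (θ ∘ₗ (Algebra.lsmul k k V a : Module.End k V)) v u) ∧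
    -- (iii) balancedness in the middle of `V ⊗_l U`: `v·a ⊗ u ∼ v ⊗ a·u`
    (∀ (a : l) (φ : U →ₗ[k] k) (θ : V →ₗ[k] k) (v : V) (u : U),
      pairVal k l U V σ φ θ (op a • v) u = pairVal k l U V σ φ θ v (a • u)) ∧
    -- (iv) `l`-coinvariance of `V ⊗_l U`: `a·v ⊗ u ∼ v ⊗ u·a`
    (∀ (a : l) (φ : U →ₗ[k] k) (θ : V →ₗ[k] k) (v : V) (u : U),
      pairVal k l U V σ φ θ (a • v) u = pairVal k l U V σ φ θ v (op a • u)) ∧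
    -- symmetry under simultaneous exchange
    (∀ (φ : U →ₗ[k] k) (θ : V →ₗ[k] k) (v : V) (u : U),
      pairVal k l U V σ φ θ v u = pairVal k l V U σ θ φ u v) := by
  constructor
  · intro a φ θ v u
    rw [pairVal_eq, pairVal_eq, pA_i₁, pA_i₂,
      casimir_B k l Tr hTrSymm σ hCasimir a hTrNondeg]
  constructor
  · intro a φ θ v u
    rw [pairVal_eq, pairVal_eq, pA_ii₁, pA_ii₂,
      casimir_C k l Tr hTrSymm σ hCasimir a hTrNondeg]
  constructor
  · intro a φ θ v u
    rw [pairVal_eq, pairVal_eq, pA_iii₁, pA_iii₂,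
      casimir_C k l Tr hTrSymm σ hCasimir a hTrNondeg]
  constructor
  · intro a φ θ v u
    rw [pairVal_eq, pairVal_eq, pA_iv₁, pA_iv₂,
      casimir_B k l Tr hTrSymm σ hCasimir a hTrNondeg]
  · intro φ θ v u
    rw [pairVal_eq, pairVal_eq, pA_symm,
      casimir_comm k l Tr hTrSymm σ hCasimir hTrNondeg]
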